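/- Fix an integer m ≥ 1, set N := 2m+1, and let W be an admissible subspace of (ℝ×ℝ)^N, i.e. a real N-dimensional linear subspace on which Im_τ q vanishes identically and Re_τ q is negative definite. Then the stabilizer {M ∈ SU(N, ℝ_τ, Q) : M(W) = W} is isomorphic as a group to the special orthogonal group SO(N) = {A ∈ Mat_N(ℝ) : AᵗA = I and det A = 1}. -/

import Mathlib

open Matrix

/-- The `n × n` real antidiagonal matrix with all antidiagonal entries equal to `1`. -/
noncomputable def Qmat (n : ℕ) : Matrix (Fin n) (Fin n) ℝ :=
  Matrix.of fun i j => if (i : ℕ) + (j : ℕ) + 1 = n then (1 : ℝ) else 0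

/-- The para-Hermitian form `q(z, z') = (vᵗQw') e₊ + (wᵗQv') e₋` on `ℝ_τⁿ`, where the
para-complex numbers are modeled by `ℝ × ℝ` (so `z i = (v i, w i)`). -/
noncomputable def paraq (n : ℕ) (z z' : Fin n → ℝ × ℝ) : ℝ × ℝ :=
  ((fun i => (z i).1) ⬝ᵥ (Qmat n).mulVec (fun i => (z' i).2),
   (fun i => (z i).2) ⬝ᵥ (Qmat n).mulVec (fun i => (z' i).1))

/-- The real part `Re_τ q` of the para-Hermitian form. -/
noncomputable def Retau (n : ℕ) (z z' : Fin n → ℝ × ℝ) : ℝ :=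
  ((paraq n z z').1 + (paraq n z z').2) / 2

/-- The τ-imaginary part `Im_τ q` of the para-Hermitian form. -/
noncomputable def Imtau (n : ℕ) (z z' : Fin n → ℝ × ℝ) : ℝ :=
  ((paraq n z z').1 - (paraq n z z').2) / 2

/-- A real `N`-dimensional subspace of `ℝ_τ^N ≅ (ℝ×ℝ)^N` is admissible if it is
Lagrangian for `Im_τ q` and `Re_τ q` is negative definite on it. -/
def IsAdmissible (N : ℕ) (W : Submodule ℝ (Fin N → ℝ × ℝ)) : Prop :=
  Module.finrank ℝ ↥W = N ∧
  (∀ z ∈ W, ∀ z' ∈ W, Imtau N z z' = 0) ∧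
  (∀ z ∈ W, z ≠ 0 → Retau N z z < 0)

/-! ### Auxiliary lemmas -/

lemma Qmat_transpose (n : ℕ) : (Qmat n)ᵀ = Qmat n := by
  ext i j
  unfold Qmat
  simp only [transpose_apply, of_apply]
  congr 1
  simp only [eq_iff_iff]; omega

lemma Qmat_apply (n : ℕ) (i j : Fin n) :
    Qmat n i j = if j = Fin.rev i then 1 else 0 := by
  unfold Qmat
  simp only [of_apply]
  congr 1
  simp only [eq_iff_iff]
  constructor
  · intro h; ext; simp [Fin.val_rev]; omega
  · rintro rfl; simp [Fin.val_rev]; omega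

lemma Qmat_mul_Qmat (n : ℕ) : Qmat n * Qmat n = 1 := by
  ext i j
  rw [mul_apply]
  simp only [Qmat_apply]
  rw [Finset.sum_eq_single (Fin.rev i)]
  · simp [Fin.rev_rev, one_apply, eq_comm]
  · intro k _ hk; simp [hk]
  · simp

lemma ext_of_dot {n : ℕ} {A B : Matrix (Fin n) (Fin n) ℝ}
    (h : ∀ v w : Fin n → ℝ, v ⬝ᵥ A.mulVec w = v ⬝ᵥ B.mulVec w) : A = B := by
  ext i j
  have := h (Pi.single i 1) (Pi.single j 1)
  simpa [Matrix.mulVec_single, single_dotProduct] using this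

lemma ext_of_mulVec {n : ℕ} {A B : Matrix (Fin n) (Fin n) ℝ}
    (h : ∀ v : Fin n → ℝ, A.mulVec v = B.mulVec v) : A = B := by
  ext i j
  have := congrFun (h (Pi.single j 1)) i
  simpa [Matrix.mulVec_single] using this

lemma fst_mulVec {n : ℕ} (M : Matrix (Fin n) (Fin n) (ℝ × ℝ)) (z : Fin n → ℝ × ℝ) :
    (fun i => ((M.mulVec z) i).1) = (M.map Prod.fst).mulVec (fun i => (z i).1) := by
  funext i
  simp [Matrix.mulVec, dotProduct, Matrix.map_apply, Prod.fst_sum]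

lemma snd_mulVec {n : ℕ} (M : Matrix (Fin n) (Fin n) (ℝ × ℝ)) (z : Fin n → ℝ × ℝ) :
    (fun i => ((M.mulVec z) i).2) = (M.map Prod.snd).mulVec (fun i => (z i).2) := by
  funext i
  simp [Matrix.mulVec, dotProduct, Matrix.map_apply, Prod.snd_sum]

lemma map_fst_mul {n : ℕ} (M N : Matrix (Fin n) (Fin n) (ℝ × ℝ)) :
    (M * N).map Prod.fst = M.map Prod.fst * N.map Prod.fst := by
  have : (RingHom.fst ℝ ℝ).mapMatrix (M * N) =
      (RingHom.fst ℝ ℝ).mapMatrix M * (RingHom.fst ℝ ℝ).mapMatrix N := map_mul _ _ _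
  simpa [RingHom.mapMatrix_apply] using this

lemma map_snd_mul {n : ℕ} (M N : Matrix (Fin n) (Fin n) (ℝ × ℝ)) :
    (M * N).map Prod.snd = M.map Prod.snd * N.map Prod.snd := by
  have : (RingHom.snd ℝ ℝ).mapMatrix (M * N) =
      (RingHom.snd ℝ ℝ).mapMatrix M * (RingHom.snd ℝ ℝ).mapMatrix N := map_mul _ _ _
  simpa [RingHom.mapMatrix_apply] using this

lemma map_fst_one {n : ℕ} : (1 : Matrix (Fin n) (Fin n) (ℝ × ℝ)).map Prod.fst = 1 := by
  have : (RingHom.fst ℝ ℝ).mapMatrix (1 : Matrix (Fin n) (Fin n) (ℝ × ℝ)) = 1 := map_one _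
  simpa [RingHom.mapMatrix_apply] using this

lemma map_snd_one {n : ℕ} : (1 : Matrix (Fin n) (Fin n) (ℝ × ℝ)).map Prod.snd = 1 := by
  have : (RingHom.snd ℝ ℝ).mapMatrix (1 : Matrix (Fin n) (Fin n) (ℝ × ℝ)) = 1 := map_one _
  simpa [RingHom.mapMatrix_apply] using this

lemma det_fst {n : ℕ} (M : Matrix (Fin n) (Fin n) (ℝ × ℝ)) :
    (M.map Prod.fst).det = M.det.1 := by
  have := (RingHom.fst ℝ ℝ).map_det M
  simpa [RingHom.mapMatrix_apply] using this.symm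

lemma det_snd {n : ℕ} (M : Matrix (Fin n) (Fin n) (ℝ × ℝ)) :
    (M.map Prod.snd).det = M.det.2 := by
  have := (RingHom.snd ℝ ℝ).map_det M
  simpa [RingHom.mapMatrix_apply] using this.symm

lemma ext_prod {n : ℕ} {M N : Matrix (Fin n) (Fin n) (ℝ × ℝ)}
    (h1 : M.map Prod.fst = N.map Prod.fst) (h2 : M.map Prod.snd = N.map Prod.snd) :
    M = N := by
  ext i j
  · simpa [Matrix.map_apply] using congrFun (congrFun h1 i) j
  · simpa [Matrix.map_apply] using congrFun (congrFun h2 i) j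

lemma dot_mulVec_mulVec {n : ℕ} (A Q B : Matrix (Fin n) (Fin n) ℝ) (v w : Fin n → ℝ) :
    (A.mulVec v) ⬝ᵥ Q.mulVec (B.mulVec w) = v ⬝ᵥ (Aᵀ * Q * B).mulVec w := by
  rw [← Matrix.vecMul_transpose]
  simp [Matrix.dotProduct_mulVec, Matrix.vecMul_vecMul, ← Matrix.mulVec_mulVec]

lemma dotB {n : ℕ} (A Q : Matrix (Fin n) (Fin n) ℝ) (v w : Fin n → ℝ) :
    (A.mulVec v) ⬝ᵥ Q.mulVec w = v ⬝ᵥ (Aᵀ * Q).mulVec w := by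
  rw [← Matrix.vecMul_transpose]
  simp [Matrix.dotProduct_mulVec, Matrix.vecMul_vecMul]

/-- first-component projection as a linear map -/
def projFst (n : ℕ) : (Fin n → ℝ × ℝ) →ₗ[ℝ] (Fin n → ℝ) where
  toFun z := fun i => (z i).1
  map_add' _ _ := rfl
  map_smul' _ _ := rfl

/-- second-component projection as a linear map -/
def projSnd (n : ℕ) : (Fin n → ℝ × ℝ) →ₗ[ℝ] (Fin n → ℝ) where
  toFun z := fun i => (z i).2
  map_add' _ _ := rfl
  map_smul' _ _ := rfl

/-- Any admissible subspace is the graph of `T` with `Q·T` symmetric and `-(Q·T)` positive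
definite. -/
lemma admissible_graph (n : ℕ) (W : Submodule ℝ (Fin n → ℝ × ℝ))
    (hW : IsAdmissible n W) :
    ∃ T : Matrix (Fin n) (Fin n) ℝ,
      (∀ z, z ∈ W ↔ (fun i => (z i).2) = T.mulVec (fun i => (z i).1)) ∧
      Qmat n * T = Tᵀ * Qmat n ∧
      (-(Qmat n * T)).IsHermitian ∧
      (∀ x : Fin n → ℝ, x ≠ 0 → 0 < star x ⬝ᵥ (-(Qmat n * T)).mulVec x) := by
  obtain ⟨hrank, hIm, hRe⟩ := hW
  set φ : ↥W →ₗ[ℝ] (Fin n → ℝ) := (projFst n).comp W.subtype with hφ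
  have hker : ∀ z : ↥W, φ z = 0 → z = 0 := by
    rintro ⟨z, hz⟩ h
    have h1 : (fun i => (z i).1) = 0 := h
    have hre : Retau n z z = 0 := by
      have e1 : (paraq n z z).1 = 0 := by
        show (fun i => (z i).1) ⬝ᵥ _ = 0
        rw [h1]; exact zero_dotProduct _
      have e2 : (paraq n z z).2 = 0 := by
        show _ ⬝ᵥ (Qmat n).mulVec (fun i => (z i).1) = 0
        rw [h1]; simp
      simp [Retau, e1, e2]
    by_contra hne
    have hz0 : z ≠ 0 := by
      intro h0; exact hne (by simp [Subtype.ext_iff, h0])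
    exact absurd hre (ne_of_lt (hRe z hz hz0))
  have hinj : Function.Injective φ := by
    rw [← LinearMap.ker_eq_bot]
    exact LinearMap.ker_eq_bot'.mpr hker
  have hdim : Module.finrank ℝ ↥W = Module.finrank ℝ (Fin n → ℝ) := by
    rw [hrank, Module.finrank_fin_fun]
  let e : ↥W ≃ₗ[ℝ] (Fin n → ℝ) := φ.linearEquivOfInjective hinj hdim
  have he : ∀ w : ↥W, e w = fun i => ((w : Fin n → ℝ × ℝ) i).1 :=
    fun w => φ.linearEquivOfInjective_apply hinj hdim w
  set L : (Fin n → ℝ) →ₗ[ℝ] (Fin n → ℝ) :=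
    ((projSnd n).comp W.subtype).comp (e.symm : (Fin n → ℝ) →ₗ[ℝ] ↥W) with hL
  set T : Matrix (Fin n) (Fin n) ℝ := LinearMap.toMatrix' L with hT
  have hTv : ∀ v, T.mulVec v = L v := by
    intro v
    rw [← Matrix.toLin'_apply, hT, Matrix.toLin'_toMatrix']
  have hLv : ∀ v, L v = fun i => ((e.symm v : Fin n → ℝ × ℝ) i).2 := fun v => rfl
  have hmem : ∀ z, z ∈ W ↔ (fun i => (z i).2) = T.mulVec (fun i => (z i).1) := by
    intro z
    constructor
    · intro hz
      rw [hTv]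
      have h1 : e.symm (fun i => (z i).1) = ⟨z, hz⟩ := by
        apply e.injective
        rw [e.apply_symm_apply, he]
      rw [hLv, h1]
    · intro h
      set x : ↥W := e.symm (fun i => (z i).1) with hx
      have hx1 : (fun i => ((x : Fin n → ℝ × ℝ) i).1) = fun i => (z i).1 := by
        rw [← he x, hx, e.apply_symm_apply]
      have hx2 : (fun i => ((x : Fin n → ℝ × ℝ) i).2) = fun i => (z i).2 := by
        rw [h, hTv, hLv]
      have : z = (x : Fin n → ℝ × ℝ) := by
        funext i
        exact Prod.ext (congrFun hx1 i).symm (congrFun hx2 i).symm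
      rw [this]; exact x.2
  have hgraph : ∀ v : Fin n → ℝ, (fun i => (v i, T.mulVec v i)) ∈ W := by
    intro v
    rw [hmem]
  have hQsym : (Qmat n)ᵀ = Qmat n := Qmat_transpose n
  have hsym : Qmat n * T = Tᵀ * Qmat n := by
    apply ext_of_dot
    intro v w
    have h0 := hIm _ (hgraph v) _ (hgraph w)
    have h1 : (paraq n (fun i => (v i, T.mulVec v i)) (fun i => (w i, T.mulVec w i))).1
        = (paraq n (fun i => (v i, T.mulVec v i)) (fun i => (w i, T.mulVec w i))).2 := by
      have := h0
      unfold Imtau at this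
      linarith
    have e1 : (paraq n (fun i => (v i, T.mulVec v i)) (fun i => (w i, T.mulVec w i))).1
        = v ⬝ᵥ (Qmat n * T).mulVec w := by
      show v ⬝ᵥ (Qmat n).mulVec (T.mulVec w) = _
      rw [Matrix.mulVec_mulVec]
    have e2 : (paraq n (fun i => (v i, T.mulVec v i)) (fun i => (w i, T.mulVec w i))).2
        = v ⬝ᵥ (Tᵀ * Qmat n).mulVec w := by
      show (T.mulVec v) ⬝ᵥ (Qmat n).mulVec w = _
      rw [dotB]
    rw [← e1, ← e2, h1]
  have hRe' : ∀ x : Fin n → ℝ, x ≠ 0 → x ⬝ᵥ (Qmat n * T).mulVec x < 0 := by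
    intro x hx
    have hz : (fun i => (x i, T.mulVec x i)) ∈ W := hgraph x
    have hz0 : (fun i => (x i, T.mulVec x i)) ≠ (0 : Fin n → ℝ × ℝ) := by
      intro h0
      apply hx
      funext i
      have := congrFun h0 i
      exact congrArg Prod.fst this
    have hlt := hRe _ hz hz0
    have e1 : (paraq n (fun i => (x i, T.mulVec x i)) (fun i => (x i, T.mulVec x i))).1
        = x ⬝ᵥ (Qmat n * T).mulVec x := by
      show x ⬝ᵥ (Qmat n).mulVec (T.mulVec x) = _
      rw [Matrix.mulVec_mulVec]
    have e2 : (paraq n (fun i => (x i, T.mulVec x i)) (fun i => (x i, T.mulVec x i))).2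
        = x ⬝ᵥ (Tᵀ * Qmat n).mulVec x := by
      show (T.mulVec x) ⬝ᵥ (Qmat n).mulVec x = _
      rw [dotB]
    unfold Retau at hlt
    rw [e1, e2, ← hsym] at hlt
    linarith
  refine ⟨T, hmem, hsym, ?_, ?_⟩
  · rw [Matrix.IsHermitian, Matrix.conjTranspose_eq_transpose_of_trivial,
      Matrix.transpose_neg, Matrix.transpose_mul, hQsym, ← hsym]
  · intro x hx
    have := hRe' x hx
    rw [star_trivial, Matrix.neg_mulVec, dotProduct_neg]
    linarith

/-- The stabilizer in `SU(2m+1, ℝ_τ, Q)` of a totally geodesic Lagrangian negative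
definite subspace `W` of `ℝ_τ^{2m+1}` is isomorphic as a group to the special orthogonal
group `SO(2m+1)`: there is a multiplication-preserving bijection from
`{A : AᵀA = 1, det A = 1}` onto the stabilizer of `W`. -/
theorem stabilizer_iso_specialOrthogonal (m : ℕ) (hm : 1 ≤ m)
    (W : Submodule ℝ (Fin (2 * m + 1) → ℝ × ℝ)) (hW : IsAdmissible (2 * m + 1) W) :
    letI SO : Set (Matrix (Fin (2 * m + 1)) (Fin (2 * m + 1)) ℝ) :=
      {A | Aᵀ * A = 1 ∧ A.det = 1}
    letI Stab : Set (Matrix (Fin (2 * m + 1)) (Fin (2 * m + 1)) (ℝ × ℝ)) :=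
      {M | IsUnit M ∧
        (∀ z z' : Fin (2 * m + 1) → ℝ × ℝ,
          paraq (2 * m + 1) (M.mulVec z) (M.mulVec z') = paraq (2 * m + 1) z z') ∧
        M.det = (1, 1) ∧
        (fun z => M.mulVec z) '' (W : Set (Fin (2 * m + 1) → ℝ × ℝ)) =
          (W : Set (Fin (2 * m + 1) → ℝ × ℝ))}
    ∃ f : Matrix (Fin (2 * m + 1)) (Fin (2 * m + 1)) ℝ →
        Matrix (Fin (2 * m + 1)) (Fin (2 * m + 1)) (ℝ × ℝ),
      Set.InjOn f SO ∧ f '' SO = Stab ∧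
      ∀ A ∈ SO, ∀ B ∈ SO, f (A * B) = f A * f B := by
  show ∃ f : Matrix (Fin (2 * m + 1)) (Fin (2 * m + 1)) ℝ →
        Matrix (Fin (2 * m + 1)) (Fin (2 * m + 1)) (ℝ × ℝ),
      Set.InjOn f {A | Aᵀ * A = 1 ∧ A.det = 1} ∧
      f '' {A | Aᵀ * A = 1 ∧ A.det = 1} =
        {M | IsUnit M ∧
          (∀ z z' : Fin (2 * m + 1) → ℝ × ℝ,
            paraq (2 * m + 1) (M.mulVec z) (M.mulVec z') = paraq (2 * m + 1) z z') ∧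
          M.det = (1, 1) ∧
          (fun z => M.mulVec z) '' (W : Set (Fin (2 * m + 1) → ℝ × ℝ)) =
            (W : Set (Fin (2 * m + 1) → ℝ × ℝ))} ∧
      ∀ A ∈ {A : Matrix (Fin (2 * m + 1)) (Fin (2 * m + 1)) ℝ | Aᵀ * A = 1 ∧ A.det = 1},
        ∀ B ∈ {A : Matrix (Fin (2 * m + 1)) (Fin (2 * m + 1)) ℝ | Aᵀ * A = 1 ∧ A.det = 1},
        f (A * B) = f A * f B
  obtain ⟨T, hmem, hsym, hherm, hposd⟩ := admissible_graph (2 * m + 1) W hW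
  have hQQ : Qmat (2 * m + 1) * Qmat (2 * m + 1) = 1 := Qmat_mul_Qmat _
  have hpos : (-(Qmat (2 * m + 1) * T)).PosDef := Matrix.PosDef.of_dotProduct_mulVec_pos hherm hposd
  open scoped MatrixOrder in
  set R : Matrix (Fin (2 * m + 1)) (Fin (2 * m + 1)) ℝ := CFC.sqrt (-(Qmat (2 * m + 1) * T)) with hRdef
  have hRS : R * R = -(Qmat (2 * m + 1) * T) := by
    open scoped MatrixOrder in
    exact CFC.sqrt_mul_sqrt_self _ hpos.posSemidef.nonneg
  have hRsym : Rᵀ = R := by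
    open scoped MatrixOrder in
    have := (CFC.sqrt_nonneg (-(Qmat (2 * m + 1) * T))).posSemidef.isHermitian
    rwa [Matrix.IsHermitian, Matrix.conjTranspose_eq_transpose_of_trivial] at this
  have hSdet : IsUnit (-(Qmat (2 * m + 1) * T)).det := hpos.det_pos.ne'.isUnit
  have hRdet : IsUnit R.det := by
    have h : IsUnit (R.det * R.det) := by
      rw [← Matrix.det_mul, hRS]; exact hSdet
    exact isUnit_of_mul_isUnit_left h
  have hT : T = -(Qmat (2 * m + 1) * (R * R)) := by
    rw [hRS, mul_neg, ← mul_assoc, hQQ, one_mul, neg_neg]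
  have cQ : ∀ X : Matrix (Fin (2 * m + 1)) (Fin (2 * m + 1)) ℝ,
      Qmat (2 * m + 1) * (Qmat (2 * m + 1) * X) = X := fun X => by
    rw [← mul_assoc, hQQ, one_mul]
  have hR1 : R⁻¹ * R = 1 := Matrix.nonsing_inv_mul _ hRdet
  have hR2 : R * R⁻¹ = 1 := Matrix.mul_nonsing_inv _ hRdet
  have cR1 : ∀ X : Matrix (Fin (2 * m + 1)) (Fin (2 * m + 1)) ℝ, R⁻¹ * (R * X) = X :=
    fun X => Matrix.nonsing_inv_mul_cancel_left _ _ hRdet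
  have cR2 : ∀ X : Matrix (Fin (2 * m + 1)) (Fin (2 * m + 1)) ℝ, R * (R⁻¹ * X) = X :=
    fun X => Matrix.mul_nonsing_inv_cancel_left _ _ hRdet
  have hRinvsym : (R⁻¹)ᵀ = R⁻¹ := by rw [Matrix.transpose_nonsing_inv, hRsym]
  set f : Matrix (Fin (2 * m + 1)) (Fin (2 * m + 1)) ℝ →
      Matrix (Fin (2 * m + 1)) (Fin (2 * m + 1)) (ℝ × ℝ) := fun A =>
    Matrix.of fun i j => ((R⁻¹ * A * R) i j,
      (Qmat (2 * m + 1) * R * A * R⁻¹ * Qmat (2 * m + 1)) i j) with hfdef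
  have hf1 : ∀ A, (f A).map Prod.fst = R⁻¹ * A * R := fun A => rfl
  have hf2 : ∀ A, (f A).map Prod.snd
      = Qmat (2 * m + 1) * R * A * R⁻¹ * Qmat (2 * m + 1) := fun A => rfl
  have hfmul : ∀ A B, f (A * B) = f A * f B := by
    intro A B
    apply ext_prod
    · rw [map_fst_mul, hf1, hf1, hf1]
      simp only [mul_assoc]
      simp only [cR2]
    · rw [map_snd_mul, hf2, hf2, hf2]
      simp only [mul_assoc]
      simp only [cQ, cR1]
  have hfone : f 1 = 1 := by
    apply ext_prod
    · rw [hf1, map_fst_one, mul_one, hR1]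
    · rw [hf2, map_snd_one, mul_one, mul_assoc (Qmat (2 * m + 1)) R R⁻¹, hR2, mul_one, hQQ]
  have hfinj : Function.Injective f := by
    intro A B h
    have h1 : R⁻¹ * A * R = R⁻¹ * B * R := by rw [← hf1, ← hf1, h]
    have h2 := congrArg (fun X => R * X * R⁻¹) h1
    simpa only [mul_assoc, cR2, hR2, mul_one] using h2
  have htrans1 : ∀ A : Matrix (Fin (2 * m + 1)) (Fin (2 * m + 1)) ℝ,
      (R⁻¹ * A * R)ᵀ = R * (Aᵀ * R⁻¹) := by
    intro A
    simp only [Matrix.transpose_mul, hRsym, hRinvsym, mul_assoc]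
  have htrans2 : ∀ A : Matrix (Fin (2 * m + 1)) (Fin (2 * m + 1)) ℝ,
      (Qmat (2 * m + 1) * R * A * R⁻¹ * Qmat (2 * m + 1))ᵀ
        = Qmat (2 * m + 1) * (R⁻¹ * (Aᵀ * (R * Qmat (2 * m + 1)))) := by
    intro A
    simp only [Matrix.transpose_mul, hRsym, hRinvsym, Qmat_transpose, mul_assoc]
  have hq1 : ∀ A : Matrix (Fin (2 * m + 1)) (Fin (2 * m + 1)) ℝ, Aᵀ * A = 1 →
      (R⁻¹ * A * R)ᵀ * Qmat (2 * m + 1) * (Qmat (2 * m + 1) * R * A * R⁻¹ * Qmat (2 * m + 1))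
        = Qmat (2 * m + 1) := by
    intro A hA
    rw [htrans1]
    simp only [mul_assoc]
    simp only [cQ, cR1]
    rw [← mul_assoc Aᵀ A, hA, one_mul, cR2]
  have hq2 : ∀ A : Matrix (Fin (2 * m + 1)) (Fin (2 * m + 1)) ℝ, Aᵀ * A = 1 →
      (Qmat (2 * m + 1) * R * A * R⁻¹ * Qmat (2 * m + 1))ᵀ * Qmat (2 * m + 1)
        * (R⁻¹ * A * R) = Qmat (2 * m + 1) := by
    intro A hA
    rw [htrans2]
    simp only [mul_assoc]
    simp only [cQ, cR2]
    rw [← mul_assoc Aᵀ A, hA, one_mul, hR1, mul_one]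
  have hcomm : ∀ A : Matrix (Fin (2 * m + 1)) (Fin (2 * m + 1)) ℝ,
      (Qmat (2 * m + 1) * R * A * R⁻¹ * Qmat (2 * m + 1)) * T = T * (R⁻¹ * A * R) := by
    intro A
    rw [hT]
    simp only [mul_neg, neg_mul, mul_assoc]
    simp only [cQ, cR1, cR2]
  have hpara : ∀ A : Matrix (Fin (2 * m + 1)) (Fin (2 * m + 1)) ℝ, Aᵀ * A = 1 →
      ∀ z z' : Fin (2 * m + 1) → ℝ × ℝ,
      paraq (2 * m + 1) ((f A).mulVec z) ((f A).mulVec z') = paraq (2 * m + 1) z z' := by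
    intro A hA z z'
    unfold paraq
    rw [fst_mulVec, snd_mulVec, fst_mulVec, snd_mulVec, hf1, hf2,
      dot_mulVec_mulVec, dot_mulVec_mulVec, hq1 A hA, hq2 A hA]
  have hmapsto : ∀ M : Matrix (Fin (2 * m + 1)) (Fin (2 * m + 1)) (ℝ × ℝ),
      (M.map Prod.snd) * T = T * (M.map Prod.fst) → ∀ z ∈ W, M.mulVec z ∈ W := by
    intro M hMT z hz
    rw [hmem] at hz ⊢
    rw [fst_mulVec, snd_mulVec, hz, Matrix.mulVec_mulVec, Matrix.mulVec_mulVec, hMT]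
  have hQdet : (Qmat (2 * m + 1)).det * (Qmat (2 * m + 1)).det = 1 := by
    rw [← Matrix.det_mul, hQQ, Matrix.det_one]
  have hRdet1 : R⁻¹.det * R.det = 1 := Matrix.det_nonsing_inv_mul_det _ hRdet
  have hfdet : ∀ A : Matrix (Fin (2 * m + 1)) (Fin (2 * m + 1)) ℝ,
      A.det = 1 → (f A).det = (1, 1) := by
    intro A hAd
    have h1 : (f A).det.1 = 1 := by
      rw [← det_fst, hf1, Matrix.det_mul, Matrix.det_mul, hAd]
      calc R⁻¹.det * 1 * R.det = R⁻¹.det * R.det := by ring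
        _ = 1 := hRdet1
    have h2 : (f A).det.2 = 1 := by
      rw [← det_snd, hf2]
      simp only [Matrix.det_mul, hAd]
      calc (Qmat (2 * m + 1)).det * R.det * 1 * R⁻¹.det * (Qmat (2 * m + 1)).det
          = ((Qmat (2 * m + 1)).det * (Qmat (2 * m + 1)).det) * (R⁻¹.det * R.det) := by ring
        _ = 1 := by rw [hQdet, hRdet1, mul_one]
    exact Prod.ext h1 h2
  refine ⟨f, fun a _ b _ h => hfinj h, ?_, fun A _ B _ => hfmul A B⟩
  apply Set.eq_of_subset_of_subset
  · rintro M' ⟨A, ⟨hA1, hA2⟩, rfl⟩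
    refine ⟨?_, hpara A hA1, hfdet A hA2, ?_⟩
    · rw [Matrix.isUnit_iff_isUnit_det, hfdet A hA2]
      exact isUnit_one
    · apply Set.eq_of_subset_of_subset
      · rintro _ ⟨z, hz, rfl⟩
        exact hmapsto (f A) (by rw [hf1, hf2]; exact hcomm A) z hz
      · intro z hz
        have hA1' : (Aᵀ)ᵀ * Aᵀ = 1 := by
          rw [Matrix.transpose_transpose]; exact mul_eq_one_comm.mp hA1
        refine ⟨(f Aᵀ).mulVec z,
          hmapsto (f Aᵀ) (by rw [hf1, hf2]; exact hcomm Aᵀ) z hz, ?_⟩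
        show (f A).mulVec ((f Aᵀ).mulVec z) = z
        rw [Matrix.mulVec_mulVec, ← hfmul, mul_eq_one_comm.mp hA1, hfone,
          Matrix.one_mulVec]
  · rintro M ⟨hMu, hMq, hMdet, hMW⟩
    have h1 : (M.map Prod.fst)ᵀ * Qmat (2 * m + 1) * (M.map Prod.snd) = Qmat (2 * m + 1) := by
      apply ext_of_dot
      intro v w
      have h := congrArg Prod.fst (hMq (fun k => (v k, 0)) (fun k => (0, w k)))
      unfold paraq at h
      rw [fst_mulVec, snd_mulVec] at h
      dsimp only at h
      rw [dot_mulVec_mulVec] at h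
      exact h
    have h2 : (M.map Prod.snd)ᵀ * Qmat (2 * m + 1) * (M.map Prod.fst) = Qmat (2 * m + 1) := by
      apply ext_of_dot
      intro v w
      have h := congrArg Prod.snd (hMq (fun k => (0, v k)) (fun k => (w k, 0)))
      unfold paraq at h
      dsimp only at h
      rw [fst_mulVec, snd_mulVec] at h
      dsimp only at h
      rw [dot_mulVec_mulVec] at h
      exact h
    have hMW' : ∀ z ∈ W, M.mulVec z ∈ W := by
      intro z hz
      have h : M.mulVec z ∈ (fun z => M.mulVec z) '' (W : Set (Fin (2 * m + 1) → ℝ × ℝ)) :=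
        ⟨z, hz, rfl⟩
      rwa [hMW] at h
    have hPT : (M.map Prod.snd) * T = T * (M.map Prod.fst) := by
      apply ext_of_mulVec
      intro v
      have hzW : (fun i => (v i, T.mulVec v i)) ∈ W := by rw [hmem]
      have h := (hmem _).mp (hMW' _ hzW)
      rw [fst_mulVec, snd_mulVec] at h
      dsimp only at h
      rw [Matrix.mulVec_mulVec, Matrix.mulVec_mulVec] at h
      exact h
    have hd1 : (M.map Prod.fst).det = 1 := by rw [det_fst, hMdet]
    have hPU : (M.map Prod.snd) * (Qmat (2 * m + 1) * (R * R))
        = Qmat (2 * m + 1) * (R * (R * (M.map Prod.fst))) := by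
      have h := hPT
      rw [hT] at h
      simp only [mul_neg, neg_mul, neg_inj, mul_assoc] at h
      exact h
    have base : (M.map Prod.fst)ᵀ * (R * (R * (M.map Prod.fst))) = R * R := by
      have h := congrArg (fun Y => Y * (Qmat (2 * m + 1) * (R * R))) h1
      simp only [mul_assoc] at h
      rw [hPU] at h
      simp only [cQ] at h
      exact h
    have key : ∀ X : Matrix (Fin (2 * m + 1)) (Fin (2 * m + 1)) ℝ,
        (M.map Prod.fst)ᵀ * (R * (R * ((M.map Prod.fst) * X))) = R * (R * X) := by
      intro X
      have h := congrArg (fun Y => Y * X) base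
      simpa only [mul_assoc] using h
    have hAt : (R * (M.map Prod.fst) * R⁻¹)ᵀ * (R * (M.map Prod.fst) * R⁻¹) = 1 := by
      simp only [Matrix.transpose_mul, hRsym, hRinvsym, mul_assoc]
      rw [key R⁻¹, cR1, hR2]
    have hAd : (R * (M.map Prod.fst) * R⁻¹).det = 1 := by
      simp only [Matrix.det_mul, hd1]
      calc R.det * 1 * R⁻¹.det = R⁻¹.det * R.det := by ring
        _ = 1 := hRdet1
    refine ⟨R * (M.map Prod.fst) * R⁻¹, ⟨hAt, hAd⟩, ?_⟩
    apply ext_prod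
    · rw [hf1]
      simp only [mul_assoc]
      rw [cR1, hR1, mul_one]
    · rw [hf2]
      simp only [mul_assoc]
      have h := congrArg (fun Y => Y * (R⁻¹ * (R⁻¹ * Qmat (2 * m + 1)))) hPU
      simp only [mul_assoc] at h
      rw [← h]
      simp only [cR2]
      rw [hQQ, mul_one]
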